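/- Let n ∈ ℕ, a, b ∈ ℝ, c ≠ 0, and f(y1,y2) = c²(y1-a)^(2n+2) + (n+1)²(y2-b)². For 1 < p < ∞ with p ≠ n+2 let τ_p = (n+2-p)/((2n+2)(1-p)) and ψ = f^(τ_p). Then ψ satisfies Δ_p ψ = 0 on ℝ² \ {(a,b)}, where Δ_p ψ = Y1(‖∇₀ψ‖^(p-2) Y1ψ) + Y2(‖∇₀ψ‖^(p-2) Y2ψ). -/

import Mathlib

noncomputable section

abbrev P2 : Type := ℝ × ℝ

/-- Grushin vector field Y1 = ∂/∂y1 (real-valued functions). -/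
def Y1r (u : P2 → ℝ) (q : P2) : ℝ := fderiv ℝ u q (1, 0)

/-- Grushin vector field Y2 = c (y1-a)^n ∂/∂y2 (real-valued functions). -/
def Y2r (a c : ℝ) (n : ℕ) (u : P2 → ℝ) (q : P2) : ℝ :=
  c * (q.1 - a) ^ n * fderiv ℝ u q (0, 1)

/-- The function f(y) = c²(y1-a)^(2n+2) + (n+1)²(y2-b)². -/
def fG (a b c : ℝ) (n : ℕ) (q : P2) : ℝ :=
  c ^ 2 * (q.1 - a) ^ (2 * n + 2) + ((n : ℝ) + 1) ^ 2 * (q.2 - b) ^ 2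

/-- ψ = f^(τ_p). -/
def psiG (a b c : ℝ) (n : ℕ) (p : ℝ) (q : P2) : ℝ :=
  fG a b c n q ^ ((n + 2 - p) / ((2 * n + 2) * (1 - p)))

/-- The Grushin p-Laplacian of ψ. -/
def DeltaPG (a b c : ℝ) (n : ℕ) (p : ℝ) (ψ : P2 → ℝ) (q : P2) : ℝ :=
  Y1r (fun r => Real.sqrt ((Y1r ψ r) ^ 2 + (Y2r a c n ψ r) ^ 2) ^ (p - 2) * Y1r ψ r) q +
  Y2r a c n (fun r => Real.sqrt ((Y1r ψ r) ^ 2 + (Y2r a c n ψ r) ^ 2) ^ (p - 2) * Y2r a c n ψ r) q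

open Real Filter

/-- derivative of t ↦ (t-a)|t-a|^α at t ≠ a -/
lemma vphi_deriv (a α t : ℝ) (h : t ≠ a) :
    HasDerivAt (fun s => (s - a) * |s - a| ^ α) ((1 + α) * |t - a| ^ α) t := by
  rcases lt_or_gt_of_ne h with hlt | hgt
  · have hev : (fun s => -((a - s) ^ (1 + α))) =ᶠ[nhds t] fun s => (s - a) * |s - a| ^ α := by
      filter_upwards [Iio_mem_nhds hlt] with s hs
      have h1 : |s - a| = a - s := by rw [abs_of_neg (by simp at hs ⊢; linarith)]; ring
      have h2 : (0:ℝ) < a - s := by simp at hs; linarith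
      rw [h1, Real.rpow_add h2, Real.rpow_one]
      ring
    have hd : HasDerivAt (fun s => -((a - s) ^ (1 + α)))
        ((1 + α) * |t - a| ^ α) t := by
      have h2 : (0:ℝ) < a - t := by linarith
      have hb : HasDerivAt (fun s : ℝ => a - s) (-1) t := by
        simpa using ((hasDerivAt_id t).const_sub a)
      have := (Real.hasDerivAt_rpow_const (p := 1 + α) (Or.inl h2.ne')).comp t hb
      have habs : |t - a| = a - t := by rw [abs_of_neg (by linarith)]; ring
      refine this.neg.congr_deriv ?_
      rw [habs]
      have : (a - t) ^ (1 + α - 1) = (a - t) ^ α := by norm_num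
      rw [this]; ring
    exact hd.congr_of_eventuallyEq hev.symm
  · have hev : (fun s => (s - a) ^ (1 + α)) =ᶠ[nhds t] fun s => (s - a) * |s - a| ^ α := by
      filter_upwards [Ioi_mem_nhds hgt] with s hs
      have h2 : (0:ℝ) < s - a := by simp at hs; linarith
      rw [abs_of_pos h2, Real.rpow_add h2, Real.rpow_one]
    have h2 : (0:ℝ) < t - a := by linarith
    have hb : HasDerivAt (fun s : ℝ => s - a) (1:ℝ) t := (hasDerivAt_id t).sub_const a
    have hd := (Real.hasDerivAt_rpow_const (p := 1 + α) (Or.inl h2.ne')).comp t hb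
    have habs : |t - a| = t - a := abs_of_pos h2
    have : HasDerivAt (fun s => (s - a) ^ (1 + α)) ((1 + α) * |t - a| ^ α) t := by
      refine hd.congr_deriv ?_
      rw [habs]
      have : (t - a) ^ (1 + α - 1) = (t - a) ^ α := by norm_num
      rw [this]; ring
    exact this.congr_of_eventuallyEq hev.symm

lemma vphi_deriv_zero (a α : ℝ) (hα : 0 < α) :
    HasDerivAt (fun s => (s - a) * |s - a| ^ α) 0 a := by
  rw [hasDerivAt_iff_tendsto_slope]
  have hev : (fun s => |s - a| ^ α) =ᶠ[nhdsWithin a {a}ᶜ] slope (fun s => (s - a) * |s - a| ^ α) a := by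
    filter_upwards [self_mem_nhdsWithin] with s hs
    have hne : s - a ≠ 0 := sub_ne_zero.mpr hs
    rw [slope_def_field]
    simp only [sub_self, zero_mul, abs_zero, Real.zero_rpow hα.ne', mul_zero, sub_zero]
    field_simp
  apply Tendsto.congr' hev
  have h0 : Filter.Tendsto (fun s : ℝ => |s - a|) (nhdsWithin a {a}ᶜ) (nhds 0) := by
    have hcont : Continuous (fun s : ℝ => |s - a|) := (continuous_id.sub continuous_const).abs
    have : Filter.Tendsto (fun s : ℝ => |s - a|) (nhds a) (nhds 0) := by
      simpa using hcont.tendsto a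
    exact this.mono_left nhdsWithin_le_nhds
  have hc : ContinuousAt (fun x : ℝ => x ^ α) 0 := Real.continuousAt_rpow_const 0 α (Or.inr hα.le)
  have := hc.tendsto.comp h0
  simpa [Function.comp_def, Real.zero_rpow hα.ne'] using this

lemma chi_diff (a : ℝ) (n : ℕ) (β t : ℝ) (h : t ≠ a) :
    DifferentiableAt ℝ (fun s => (s - a) ^ n * |s - a| ^ β) t := by
  have hne : t - a ≠ 0 := sub_ne_zero.mpr h
  have h1 : DifferentiableAt ℝ (fun s : ℝ => (s - a) ^ n) t :=
    (differentiableAt_id.sub_const a).pow n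
  have h2 : DifferentiableAt ℝ (fun s : ℝ => |s - a| ^ β) t := by
    have ha : DifferentiableAt ℝ (fun s : ℝ => |s - a|) t := by
      rcases hne.lt_or_gt with hlt | hgt
      · apply DifferentiableAt.congr_of_eventuallyEq ((differentiableAt_const a).sub differentiableAt_id)
        filter_upwards [Iio_mem_nhds (show t < a by linarith)] with s hs
        rw [abs_of_neg (by simp at hs; linarith)]; simp [id]
      · apply DifferentiableAt.congr_of_eventuallyEq (differentiableAt_id.sub_const a)
        filter_upwards [Ioi_mem_nhds (show a < t by linarith)] with s hs
        exact abs_of_pos (by simp at hs; linarith)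
    have hr : DifferentiableAt ℝ (fun x : ℝ => x ^ β) |t - a| :=
      Real.differentiableAt_rpow_const_of_ne β (abs_ne_zero.mpr hne)
    exact hr.comp t ha
  exact h1.mul h2

def LfG (a b c : ℝ) (n : ℕ) (r : P2) : P2 →L[ℝ] ℝ :=
  (2 * ((n:ℝ)+1) * c^2 * (r.1-a)^(2*n+1)) • (ContinuousLinearMap.fst ℝ ℝ ℝ) +
  (2 * ((n:ℝ)+1)^2 * (r.2-b)) • (ContinuousLinearMap.snd ℝ ℝ ℝ)

lemma fG_hasFDerivAt (a b c : ℝ) (n : ℕ) (r : P2) :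
    HasFDerivAt (fG a b c n) (LfG a b c n r) r := by
  have h1 : HasFDerivAt (fun q : P2 => q.1 - a) (ContinuousLinearMap.fst ℝ ℝ ℝ) r :=
    (hasFDerivAt_fst.sub_const a)
  have h2 : HasFDerivAt (fun q : P2 => q.2 - b) (ContinuousLinearMap.snd ℝ ℝ ℝ) r :=
    (hasFDerivAt_snd.sub_const b)
  have h1p := ((hasDerivAt_pow (2*n+2) (r.1-a)).comp_hasFDerivAt r h1).const_mul (c^2)
  have h2p := ((hasDerivAt_pow 2 (r.2-b)).comp_hasFDerivAt r h2).const_mul (((n:ℝ)+1)^2)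
  have := h1p.add h2p
  refine this.congr_fderiv ?_
  unfold LfG
  ext v
  · simp; push_cast; ring
  · simp; push_cast; ring

lemma rpow_comp_fG (a b c : ℝ) (n : ℕ) (E : ℝ) (r : P2) (hf : 0 < fG a b c n r) :
    HasFDerivAt (fun s => fG a b c n s ^ E)
      ((E * fG a b c n r ^ (E - 1)) • LfG a b c n r) r := by
  have hr := Real.hasDerivAt_rpow_const (x := fG a b c n r) (p := E) (Or.inl hf.ne')
  exact hr.comp_hasFDerivAt r (fG_hasFDerivAt a b c n r)

noncomputable def tauP (n : ℕ) (p : ℝ) : ℝ := (n + 2 - p) / ((2 * n + 2) * (1 - p))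

variable (a b c : ℝ) (n : ℕ) (p : ℝ)

lemma LfG_apply (r : P2) (v : P2) :
    LfG a b c n r v = 2 * ((n:ℝ)+1) * c^2 * (r.1-a)^(2*n+1) * v.1
      + 2 * ((n:ℝ)+1)^2 * (r.2-b) * v.2 := by
  simp [LfG]

lemma Y1_psi (r : P2) (hf : 0 < fG a b c n r) :
    Y1r (psiG a b c n p) r =
      tauP n p * fG a b c n r ^ (tauP n p - 1) * (2*((n:ℝ)+1)*c^2*(r.1-a)^(2*n+1)) := by
  have h : HasFDerivAt (psiG a b c n p)
      ((tauP n p * fG a b c n r ^ (tauP n p - 1)) • LfG a b c n r) r :=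
    rpow_comp_fG a b c n (tauP n p) r hf
  rw [Y1r, h.fderiv]
  simp [LfG_apply]

lemma Y2_psi (r : P2) (hf : 0 < fG a b c n r) :
    Y2r a c n (psiG a b c n p) r =
      c * (r.1-a)^n * (tauP n p * fG a b c n r ^ (tauP n p - 1) * (2*((n:ℝ)+1)^2*(r.2-b))) := by
  have h : HasFDerivAt (psiG a b c n p)
      ((tauP n p * fG a b c n r ^ (tauP n p - 1)) • LfG a b c n r) r :=
    rpow_comp_fG a b c n (tauP n p) r hf
  rw [Y2r, h.fderiv]
  simp [LfG_apply]
end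

section
variable (a b c : ℝ) (n : ℕ) (p : ℝ)

lemma sqrt_formula (r : P2) (hf : 0 < fG a b c n r) :
    Real.sqrt ((Y1r (psiG a b c n p) r)^2 + (Y2r a c n (psiG a b c n p) r)^2)
      = (2*((n:ℝ)+1)* |c| * |tauP n p|) * fG a b c n r ^ (tauP n p - 1/2) * |r.1-a| ^ ((n:ℝ)) := by
  set τ := tauP n p with hτdef
  set m : ℝ := (n:ℝ)+1 with hm
  set fr := fG a b c n r with hfr
  set u := fr ^ (τ-1) with hu
  set s := fr ^ (1/2 : ℝ) with hs
  have h1 : fr ^ (τ - 1/2) = u * s := by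
    rw [hu, hs, ← Real.rpow_add hf]; ring_nf
  have hs2 : s^2 = fr := by
    rw [hs, ← Real.rpow_natCast (fr ^ (1/2:ℝ)) 2, ← Real.rpow_mul hf.le]; norm_num
  have hA2 : (|r.1-a| ^ ((n:ℝ)))^2 = (r.1-a)^(2*n) := by
    rw [Real.rpow_natCast, ← pow_mul, show n*2 = 2*n by ring, pow_mul, pow_mul, sq_abs]
  have key : (τ*u*(2*m*c^2*(r.1-a)^(2*n+1)))^2 + (c*(r.1-a)^n*(τ*u*(2*m^2*(r.2-b))))^2
      = ((2*m*|c| * |τ|) * (u * s) * (|r.1-a| ^ ((n:ℝ))))^2 := by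
    have expand2 : ((2*m*|c| * |τ|) * (u * s) * (|r.1-a| ^ ((n:ℝ))))^2
        = (2*m*|c| * |τ|)^2 * u^2 * s^2 * (|r.1-a| ^ ((n:ℝ)))^2 := by ring
    rw [expand2, hs2, hA2,
      show (2*m*|c| * |τ|)^2 = 4*m^2*c^2*τ^2 by rw [mul_pow, mul_pow, mul_pow, sq_abs, sq_abs]; ring]
    have : fr = c ^ 2 * (r.1 - a) ^ (2 * n + 2) + m ^ 2 * (r.2 - b) ^ 2 := rfl
    rw [this]
    ring
  rw [Y1_psi a b c n p r hf, Y2_psi a b c n p r hf, ← hτdef, ← hm, ← hfr, ← hu, h1, key]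
  exact Real.sqrt_sq (by positivity)
end

lemma abs_combine (x : ℝ) (n : ℕ) (p : ℝ) :
    |x| ^ ((n:ℝ)*(p-2)) * x^(2*n+1) = x * |x| ^ ((n:ℝ)*p) := by
  rcases eq_or_ne x 0 with h0 | hx
  · simp [h0]
  · have ha : 0 < |x| := abs_pos.mpr hx
    have h1 : x^(2*n+1) = x * |x| ^ ((2*n : ℕ):ℝ) := by
      have hnn : (0:ℝ) ≤ x^(2*n) := by rw [pow_mul]; positivity
      rw [Real.rpow_natCast, pow_succ', ← abs_pow, abs_of_nonneg hnn]
    rw [h1, ← mul_assoc, mul_comm (|x| ^ ((n:ℝ)*(p-2))) x, mul_assoc, ← Real.rpow_add ha]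
    congr 1
    push_cast; ring

lemma rpow_split (K A fr : ℝ) (hK : 0 ≤ K) (hA : 0 ≤ A) (hf : 0 < fr) (e z : ℝ) :
    (K * fr ^ e * A) ^ z = K ^ z * fr ^ (e*z) * A ^ z := by
  rw [Real.mul_rpow (by positivity) hA, Real.mul_rpow hK (by positivity), Real.rpow_mul hf.le]

section
variable (a b c : ℝ) (n : ℕ) (p : ℝ)

lemma g1_eq (r : P2) (hf : 0 < fG a b c n r) :
    Real.sqrt ((Y1r (psiG a b c n p) r)^2 + (Y2r a c n (psiG a b c n p) r)^2) ^ (p-2)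
        * Y1r (psiG a b c n p) r
      = ((2*((n:ℝ)+1) * |c| * |tauP n p|)^(p-2) * tauP n p * (2*((n:ℝ)+1)*c^2))
        * fG a b c n r ^ ((tauP n p - 1/2)*(p-2) + (tauP n p - 1))
        * ((r.1-a) * |r.1-a| ^ ((n:ℝ)*p)) := by
  rw [sqrt_formula a b c n p r hf, Y1_psi a b c n p r hf]
  rw [rpow_split _ _ _ (by positivity) (by positivity) hf]
  rw [← Real.rpow_mul (abs_nonneg _)]
  set τ := tauP n p
  set m : ℝ := (n:ℝ)+1
  set fr := fG a b c n r
  have hcomb : fr ^ ((τ-1/2)*(p-2)) * fr ^ (τ-1) = fr ^ ((τ-1/2)*(p-2) + (τ-1)) :=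
    (Real.rpow_add hf _ _).symm
  have habs := abs_combine (r.1-a) n p
  calc (2*m * |c| * |τ|)^(p-2) * fr ^ ((τ-1/2)*(p-2)) * |r.1-a| ^ ((n:ℝ)*(p-2))
        * (τ * fr ^ (τ-1) * (2*m*c^2*(r.1-a)^(2*n+1)))
      = ((2*m * |c| * |τ|)^(p-2) * τ * (2*m*c^2))
        * (fr ^ ((τ-1/2)*(p-2)) * fr ^ (τ-1))
        * (|r.1-a| ^ ((n:ℝ)*(p-2)) * (r.1-a)^(2*n+1)) := by ring
    _ = _ := by rw [hcomb, habs]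

lemma g2_eq (r : P2) (hf : 0 < fG a b c n r) :
    Real.sqrt ((Y1r (psiG a b c n p) r)^2 + (Y2r a c n (psiG a b c n p) r)^2) ^ (p-2)
        * Y2r a c n (psiG a b c n p) r
      = ((2*((n:ℝ)+1) * |c| * |tauP n p|)^(p-2) * tauP n p * (2*((n:ℝ)+1)^2*c))
        * (fG a b c n r ^ ((tauP n p - 1/2)*(p-2) + (tauP n p - 1)) * (r.2-b))
        * ((r.1-a)^n * |r.1-a| ^ ((n:ℝ)*(p-2))) := by
  rw [sqrt_formula a b c n p r hf, Y2_psi a b c n p r hf]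
  rw [rpow_split _ _ _ (by positivity) (by positivity) hf]
  rw [← Real.rpow_mul (abs_nonneg _)]
  set τ := tauP n p
  set m : ℝ := (n:ℝ)+1
  set fr := fG a b c n r
  have hcomb : fr ^ ((τ-1/2)*(p-2)) * fr ^ (τ-1) = fr ^ ((τ-1/2)*(p-2) + (τ-1)) :=
    (Real.rpow_add hf _ _).symm
  calc (2*m * |c| * |τ|)^(p-2) * fr ^ ((τ-1/2)*(p-2)) * |r.1-a| ^ ((n:ℝ)*(p-2))
        * (c*(r.1-a)^n*(τ * fr ^ (τ-1) * (2*m^2*(r.2-b))))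
      = ((2*m * |c| * |τ|)^(p-2) * τ * (2*m^2*c))
        * ((fr ^ ((τ-1/2)*(p-2)) * fr ^ (τ-1)) * (r.2-b))
        * ((r.1-a)^n * |r.1-a| ^ ((n:ℝ)*(p-2))) := by ring
    _ = _ := by rw [hcomb]
end

section
variable (a b c : ℝ) (n : ℕ) (p : ℝ)

lemma abs_combine2 (x : ℝ) (n : ℕ) (p : ℝ) (hp : 0 < p) :
    x^(2*n) * |x| ^ ((n:ℝ)*(p-2)) = |x| ^ ((n:ℝ)*p) := by
  rcases eq_or_ne x 0 with h0 | hx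
  · rcases Nat.eq_zero_or_pos n with hn | hn
    · simp [h0, hn]
    · have h1 : ((n:ℝ)*p) ≠ 0 := by positivity
      have h2 : 2*n ≠ 0 := by omega
      simp [h0, zero_pow h2, Real.zero_rpow h1]
  · have ha : 0 < |x| := abs_pos.mpr hx
    have h1 : x^(2*n) = |x| ^ (((2*n : ℕ)):ℝ) := by
      rw [Real.rpow_natCast, ← abs_pow, abs_of_nonneg (by rw [pow_mul]; positivity)]
    rw [h1, ← Real.rpow_add ha]
    congr 1
    push_cast; ring

lemma fG_pos (hc : c ≠ 0) (r : P2) (hr : r ≠ (a,b)) : 0 < fG a b c n r := by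
  have h : r.1 ≠ a ∨ r.2 ≠ b := by
    by_contra h; push_neg at h
    exact hr (Prod.ext h.1 h.2)
  unfold fG
  have e : (c*(r.1-a)^(n+1))^2 = c^2*(r.1-a)^(2*n+2) := by ring
  rcases h with h | h
  · have hx : r.1 - a ≠ 0 := sub_ne_zero.mpr h
    have h1 : 0 < (c*(r.1-a)^(n+1))^2 :=
      lt_of_le_of_ne (sq_nonneg _) (Ne.symm (pow_ne_zero 2 (mul_ne_zero hc (pow_ne_zero _ hx))))
    have h2 : 0 ≤ ((n:ℝ)+1)^2*(r.2-b)^2 := by positivity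
    linarith [e ▸ h1]
  · have hy : r.2 - b ≠ 0 := sub_ne_zero.mpr h
    have h1 : 0 < ((n:ℝ)+1)^2*(r.2-b)^2 :=
      mul_pos (by positivity) (lt_of_le_of_ne (sq_nonneg _) (Ne.symm (pow_ne_zero 2 hy)))
    have h2 : 0 ≤ (c*(r.1-a)^(n+1))^2 := sq_nonneg _
    linarith [e ▸ h2]
end


theorem grushin_p_harmonic (a b c : ℝ) (hc : c ≠ 0) (n : ℕ) (p : ℝ)
    (hp1 : 1 < p) (hpn : p ≠ n + 2) (q : P2) (hq : q ≠ (a, b)) :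
    DeltaPG a b c n p (psiG a b c n p) q = 0 := by
  have hp0 : (0:ℝ) < p := lt_trans zero_lt_one hp1
  have hm : (0:ℝ) < (n:ℝ)+1 := by positivity
  have hτ : tauP n p ≠ 0 := by
    apply div_ne_zero
    · exact sub_ne_zero.mpr (fun h => hpn h.symm)
    · exact mul_ne_zero (by positivity) (sub_ne_zero.mpr hp1.ne)
  have hfq : 0 < fG a b c n q := fG_pos a b c n hc q hq
  set τ := tauP n p with hτdef
  set m : ℝ := (n:ℝ)+1 with hmdef
  set E : ℝ := (τ - 1/2)*(p-2) + (τ - 1) with hEdef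
  set K : ℝ := 2*m * |c| * |τ| with hKdef
  set KA : ℝ := K^(p-2) * τ * (2*m*c^2) with hKAdef
  set KM : ℝ := K^(p-2) * τ * (2*m^2*c) with hKMdef
  -- eventual equality with smooth representatives
  have hU : {(a,b)}ᶜ ∈ nhds q := (isOpen_compl_singleton).mem_nhds hq
  have hev1 : (fun r => Real.sqrt ((Y1r (psiG a b c n p) r)^2 + (Y2r a c n (psiG a b c n p) r)^2) ^ (p-2)
        * Y1r (psiG a b c n p) r)
      =ᶠ[nhds q] (fun r => KA * (fG a b c n r ^ E * ((r.1-a) * |r.1-a| ^ ((n:ℝ)*p)))) := by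
    filter_upwards [hU] with r hr
    rw [g1_eq a b c n p r (fG_pos a b c n hc r hr)]
    ring
  have hev2 : (fun r => Real.sqrt ((Y1r (psiG a b c n p) r)^2 + (Y2r a c n (psiG a b c n p) r)^2) ^ (p-2)
        * Y2r a c n (psiG a b c n p) r)
      =ᶠ[nhds q] (fun r => KM * ((fG a b c n r ^ E * (r.2-b)) * ((r.1-a)^n * |r.1-a| ^ ((n:ℝ)*(p-2))))) := by
    filter_upwards [hU] with r hr
    rw [g2_eq a b c n p r (fG_pos a b c n hc r hr)]
    ring
  have hfE : HasFDerivAt (fun r => fG a b c n r ^ E) ((E * fG a b c n q ^ (E-1)) • LfG a b c n q) q :=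
    rpow_comp_fG a b c n E q hfq
  rw [show DeltaPG a b c n p (psiG a b c n p) q
      = fderiv ℝ (fun r => Real.sqrt ((Y1r (psiG a b c n p) r)^2 + (Y2r a c n (psiG a b c n p) r)^2) ^ (p-2)
          * Y1r (psiG a b c n p) r) q (1,0)
        + c * (q.1-a)^n * fderiv ℝ (fun r => Real.sqrt ((Y1r (psiG a b c n p) r)^2
            + (Y2r a c n (psiG a b c n p) r)^2) ^ (p-2)
          * Y2r a c n (psiG a b c n p) r) q (0,1) from rfl]
  rw [hev1.fderiv_eq, hev2.fderiv_eq]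
  by_cases hdeg : q.1 = a ∧ n ≠ 0
  · -- degenerate branch
    obtain ⟨hqa, hn0⟩ := hdeg
    have hnp : 0 < (n:ℝ)*p := by
      have : (0:ℝ) < (n:ℝ) := by exact_mod_cast Nat.pos_of_ne_zero hn0
      positivity
    have hvφ0 : HasDerivAt (fun t => (t - a) * |t - a| ^ ((n:ℝ)*p)) 0 q.1 :=
      hqa ▸ vphi_deriv_zero a ((n:ℝ)*p) hnp
    have hG1 : HasFDerivAt (fun r : P2 => KA * (fG a b c n r ^ E * ((r.1-a) * |r.1-a| ^ ((n:ℝ)*p))))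
        (0 : P2 →L[ℝ] ℝ) q := by
      have h := (hfE.mul (hvφ0.comp_hasFDerivAt q hasFDerivAt_fst)).const_mul KA
      refine h.congr_fderiv ?_
      refine ContinuousLinearMap.ext fun v => ?_
      simp [hqa, LfG_apply]
    rw [hG1.fderiv, hqa]
    simp [zero_pow hn0]
  · -- smooth branch
    push_neg at hdeg
    have hsm : q.1 ≠ a ∨ n = 0 := by
      by_cases h : q.1 = a
      · exact Or.inr (hdeg h)
      · exact Or.inl h
    have hvφ : HasDerivAt (fun t => (t - a) * |t - a| ^ ((n:ℝ)*p))
        ((1+(n:ℝ)*p) * |q.1-a| ^ ((n:ℝ)*p)) q.1 := by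
      rcases hsm with h | h
      · exact vphi_deriv a _ q.1 h
      · subst h
        simp only [Nat.cast_zero, zero_mul, Real.rpow_zero, mul_one, add_zero]
        simpa using (hasDerivAt_id q.1).sub_const a
    have hχ : ∃ d, HasDerivAt (fun t => (t-a)^n * |t-a| ^ ((n:ℝ)*(p-2))) d q.1 := by
      rcases hsm with h | h
      · exact ⟨_, ((chi_diff a n ((n:ℝ)*(p-2)) q.1 h).hasDerivAt)⟩
      · subst h
        refine ⟨0, ?_⟩
        simp only [pow_zero, Nat.cast_zero, zero_mul, Real.rpow_zero, mul_one, one_mul]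
        exact hasDerivAt_const _ _
    obtain ⟨χ', hχ'⟩ := hχ
    have hG1 : HasFDerivAt (fun r : P2 => KA * (fG a b c n r ^ E * ((r.1-a) * |r.1-a| ^ ((n:ℝ)*p))))
        (KA • ((fG a b c n q ^ E) • (((1+(n:ℝ)*p) * |q.1-a| ^ ((n:ℝ)*p)) • ContinuousLinearMap.fst ℝ ℝ ℝ)
          + ((q.1-a) * |q.1-a| ^ ((n:ℝ)*p)) • ((E * fG a b c n q ^ (E-1)) • LfG a b c n q))) q :=
      (hfE.mul (hvφ.comp_hasFDerivAt q hasFDerivAt_fst)).const_mul KA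
    have hG2 : HasFDerivAt (fun r : P2 => KM * ((fG a b c n r ^ E * (r.2-b)) * ((r.1-a)^n * |r.1-a| ^ ((n:ℝ)*(p-2)))))
        (KM • (((fG a b c n q ^ E * (q.2-b))) • (χ' • ContinuousLinearMap.fst ℝ ℝ ℝ)
          + ((q.1-a)^n * |q.1-a| ^ ((n:ℝ)*(p-2))) • ((fG a b c n q ^ E) • ContinuousLinearMap.snd ℝ ℝ ℝ
            + (q.2-b) • ((E * fG a b c n q ^ (E-1)) • LfG a b c n q)))) q := by
      have hsnd : HasFDerivAt (fun r : P2 => r.2 - b) (ContinuousLinearMap.snd ℝ ℝ ℝ) q :=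
        hasFDerivAt_snd.sub_const b
      exact ((hfE.mul hsnd).mul (hχ'.comp_hasFDerivAt q hasFDerivAt_fst)).const_mul KM
    rw [hG1.fderiv, hG2.fderiv]
    simp only [ContinuousLinearMap.smul_apply, ContinuousLinearMap.add_apply,
      ContinuousLinearMap.coe_fst', ContinuousLinearMap.coe_snd', LfG_apply, smul_eq_mul]
    set x := q.1 - a with hxdef
    set y := q.2 - b with hydef
    have hfr : fG a b c n q = c^2*x^(2*n+2) + m^2*y^2 := by rw [hmdef]; rfl
    have h1 : fG a b c n q ^ E = fG a b c n q ^ (E-1) * (c^2*x^(2*n+2) + m^2*y^2) := by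
      conv_lhs => rw [show E = (E-1)+1 by ring, Real.rpow_add_one hfq.ne']
      rw [hfr]
    have h2 : x^(2*n) * |x| ^ ((n:ℝ)*(p-2)) = |x| ^ ((n:ℝ)*p) := abs_combine2 x n p hp0
    have hden1 : (2*(n:ℝ)+2) ≠ 0 := by positivity
    have hden2 : (1:ℝ) - p ≠ 0 := sub_ne_zero.mpr hp1.ne
    have key : 2*m*E + (1 + (n:ℝ)*p + m) = 0 := by
      rw [hEdef, hτdef, hmdef]
      simp only [tauP]
      field_simp
      ring
    rw [h1, hKAdef, hKMdef, ← hmdef]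
    linear_combination
      (c * (K^(p-2) * τ * (2*m^2*c)) * (fG a b c n q^(E-1)*(c^2*x^(2*n+2)+m^2*y^2)
        + 2*m^2*E*(fG a b c n q^(E-1))*y^2)) * h2
      + ((K^(p-2) * τ * (2*m*c^2)) * (fG a b c n q^(E-1)) * (|x| ^ ((n:ℝ)*p))
        * (c^2*x^(2*n+2)+m^2*y^2)) * key
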